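/- The number of bargraphs of semiperimeter n with no two consecutive U steps and having exactly j H steps equals the number of secondary structures on n−1 vertices with j−1 vertices of degree at most 2 from non-consecutive edges; in particular, for every n ≥ 2, the number of bargraphs of semiperimeter n with no two consecutive U steps equals the number of secondary structures on n−1 vertices. -/

import Mathlib

/-- Steps of bargraphs / Motzkin paths. -/
inductive Step where
  | U : Step
  | H : Step
  | D : Step
deriving DecidableEq

/-- Vertical displacement of a step. -/
def Step.val : Step → ℤ
  | .U => 1
  | .H => 0
  | .D => -1

/-- Mirror of a step (swap U and D). -/
def Step.mirror : Step → Step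
  | .U => .D
  | .H => .H
  | .D => .U

/-- Final height of a word. -/
def hgt (w : List Step) : ℤ := (w.map Step.val).sum

/-- A Motzkin path prefix: never goes below the x-axis. -/
def IsMotzkinPrefix (w : List Step) : Prop := ∀ p : List Step, p <+: w → 0 ≤ hgt p

/-- A Motzkin path: never below the x-axis, ends at height 0. -/
def IsMotzkin (w : List Step) : Prop := IsMotzkinPrefix w ∧ hgt w = 0

/-- No peak `UD` and no valley `DU`. -/
def Cornerless (w : List Step) : Prop :=
  ¬ [Step.U, Step.D] <:+: w ∧ ¬ [Step.D, Step.U] <:+: w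

/-- A bargraph: starts at the origin, ends on the x-axis, stays strictly above the
x-axis except at the endpoints, and has no factor `UD` or `DU`. -/
def IsBargraph (w : List Step) : Prop :=
  2 ≤ w.length ∧ hgt w = 0 ∧
    (∀ p : List Step, p <+: w → p ≠ [] → p ≠ w → 0 < hgt p) ∧ Cornerless w

/-- Semiperimeter: number of `U` steps plus number of `H` steps. -/
def semi (w : List Step) : ℕ := w.count Step.U + w.count Step.H

/-- Length of the initial run of `U` steps. -/
def leadU : List Step → ℕ
  | Step.U :: rest => leadU rest + 1
  | _ => 0

/-- Length of the initial run of `H` steps. -/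
def leadH : List Step → ℕ
  | Step.H :: rest => leadH rest + 1
  | _ => 0

/-- Length of the initial run of `D` steps. -/
def leadD : List Step → ℕ
  | Step.D :: rest => leadD rest + 1
  | _ => 0

/-- Length of the first maximal run of `D` steps (0 if none). -/
def firstDescLen : List Step → ℕ
  | [] => 0
  | Step.D :: rest => leadD rest + 1
  | _ :: rest => firstDescLen rest

/-- Number of occurrences of the two-letter factor `a b`. -/
def cnt2 (a b : Step) : List Step → ℕ
  | x :: y :: rest => (if x = a ∧ y = b then 1 else 0) + cnt2 a b (y :: rest)
  | _ => 0

/-- Heights of the columns (`H` steps), starting from a given height. -/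
def colHeights : ℤ → List Step → List ℤ
  | _, [] => []
  | h, Step.U :: rest => colHeights (h + 1) rest
  | h, Step.H :: rest => h :: colHeights h rest
  | h, Step.D :: rest => colHeights (h - 1) rest

/-- Width of the leftmost maximal horizontal segment (0 if none). -/
def lhsW : List Step → ℕ
  | [] => 0
  | Step.H :: rest => leadH rest + 1
  | _ :: rest => lhsW rest

/-- Delete `h` steps at the start of the leftmost horizontal segment. -/
def stripLeadH (h : ℕ) : List Step → List Step
  | [] => []
  | Step.H :: rest => List.drop h (Step.H :: rest)
  | s :: rest => s :: stripLeadH h rest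

/-- Number of initial columns of height 1: largest `j` such that the word begins `U H^j`. -/
def iuc : List Step → ℕ
  | Step.U :: rest => leadH rest
  | _ => 0

/-- Number of maximal horizontal segments. -/
def hsCount : List Step → ℕ
  | [] => 0
  | [Step.H] => 1
  | [_] => 0
  | a :: b :: rest => (if a = Step.H ∧ b ≠ Step.H then 1 else 0) + hsCount (b :: rest)

/-- Mirror image: reverse the word and swap `U` with `D`. -/
def mir (w : List Step) : List Step := (w.reverse).map Step.mirror

/-- Shape of strictly alternating bargraphs:
`U^{i₁} H D^{k₁} H U^{i₂} H D^{k₂} H ⋯ U^{iₘ} H D^{kₘ}` with all `iᵣ, kᵣ ≥ 1`. -/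
inductive SAShape : List Step → Prop where
  | base (i k : ℕ) : 1 ≤ i → 1 ≤ k →
      SAShape (List.replicate i Step.U ++ [Step.H] ++ List.replicate k Step.D)
  | cons (i k : ℕ) (w : List Step) : 1 ≤ i → 1 ≤ k → SAShape w →
      SAShape (List.replicate i Step.U ++ [Step.H] ++ List.replicate k Step.D ++ [Step.H] ++ w)

/-- A strictly alternating bargraph. -/
def IsStrictAlt (w : List Step) : Prop := IsBargraph w ∧ SAShape w

/-- A secondary structure on `{0, …, m-1}`: all consecutive edges are present, every
vertex has at most one non-consecutive neighbour, and there are no crossing edges. -/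
def IsSecondaryStructure {m : ℕ} (G : SimpleGraph (Fin m)) : Prop :=
  (∀ i j : Fin m, (i : ℕ) + 1 = (j : ℕ) → G.Adj i j) ∧
  (∀ i j k : Fin m, G.Adj i j → G.Adj i k →
      (i : ℕ) + 1 ≠ (j : ℕ) → (j : ℕ) + 1 ≠ (i : ℕ) →
      (i : ℕ) + 1 ≠ (k : ℕ) → (k : ℕ) + 1 ≠ (i : ℕ) → j = k) ∧
  ¬ ∃ i j k l : Fin m, (i : ℕ) < (j : ℕ) ∧ (j : ℕ) < (k : ℕ) ∧ (k : ℕ) < (l : ℕ) ∧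
      G.Adj i k ∧ G.Adj j l

/-- Generating function of bargraphs: `x` (variable 0) marks `H` steps,
`y` (variable 1) marks `U` steps. -/
noncomputable def BG : MvPowerSeries (Fin 2) ℚ :=
  fun d => (Nat.card {w : List Step //
    IsBargraph w ∧ w.count Step.H = d 0 ∧ w.count Step.U = d 1} : ℚ)

/-- Generating function of cornerless Motzkin paths. -/
noncomputable def MG : MvPowerSeries (Fin 2) ℚ :=
  fun d => (Nat.card {w : List Step //
    IsMotzkin w ∧ Cornerless w ∧ w.count Step.H = d 0 ∧ w.count Step.U = d 1} : ℚ)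

/-- Generating function of bargraphs avoiding the factor `DH`. -/
noncomputable def BDH : MvPowerSeries (Fin 2) ℚ :=
  fun d => (Nat.card {w : List Step //
    IsBargraph w ∧ ¬ [Step.D, Step.H] <:+: w ∧
      w.count Step.H = d 0 ∧ w.count Step.U = d 1} : ℚ)

/-- Generating function of bargraphs avoiding the factors `DH` and `HH`. -/
noncomputable def BDHHH : MvPowerSeries (Fin 2) ℚ :=
  fun d => (Nat.card {w : List Step //
    IsBargraph w ∧ ¬ [Step.D, Step.H] <:+: w ∧ ¬ [Step.H, Step.H] <:+: w ∧
      w.count Step.H = d 0 ∧ w.count Step.U = d 1} : ℚ)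

/-- Generating function of cornerless Motzkin path prefixes ending at height `h`. -/
noncomputable def Pgf (h : ℕ) : MvPowerSeries (Fin 2) ℚ :=
  fun d => (Nat.card {w : List Step //
    IsMotzkinPrefix w ∧ Cornerless w ∧ hgt w = (h : ℤ) ∧
      w.count Step.H = d 0 ∧ w.count Step.U = d 1} : ℚ)

/-- Decomposition `G = U^a G₁ H G₂ D^a` of a strictly alternating bargraph. -/
def SADecomp (t : ℕ × List Step × List Step) (G : List Step) : Prop :=
  1 ≤ t.1 ∧ IsStrictAlt t.2.1 ∧ IsStrictAlt (Step.U :: (t.2.2 ++ [Step.D])) ∧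
    G = List.replicate t.1 Step.U ++ t.2.1 ++ [Step.H] ++ t.2.2 ++
      List.replicate t.1 Step.D

namespace SecAux

open List

/-! ### Basic lemmas -/

@[simp] lemma hgt_nil : hgt [] = 0 := rfl
@[simp] lemma hgt_cons (s : Step) (l : List Step) : hgt (s :: l) = s.val + hgt l := by
  simp [hgt]
@[simp] lemma hgt_append (l₁ l₂ : List Step) : hgt (l₁ ++ l₂) = hgt l₁ + hgt l₂ := by
  simp [hgt]

lemma prefix_append_cases {α : Type*} : ∀ {p a b : List α}, p <+: a ++ b →
    p <+: a ∨ ∃ q, q <+: b ∧ p = a ++ q := by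
  intro p a
  induction a generalizing p with
  | nil => intro b h; exact Or.inr ⟨p, h, rfl⟩
  | cons x a' ih =>
    intro b h
    cases p with
    | nil => exact Or.inl (nil_prefix)
    | cons y p' =>
      rw [cons_append, cons_prefix_cons] at h
      obtain ⟨rfl, h'⟩ := h
      rcases ih h' with h2 | ⟨q, hq, rfl⟩
      · exact Or.inl (cons_prefix_cons.2 ⟨rfl, h2⟩)
      · exact Or.inr ⟨q, hq, rfl⟩

lemma pair_infix_cons {a b c : Step} {l : List Step} :
    [a, b] <:+: (c :: l) ↔ (c = a ∧ ∃ t, l = b :: t) ∨ [a, b] <:+: l := by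
  rw [List.infix_cons_iff]
  constructor
  · rintro (h | h)
    · rw [cons_prefix_cons] at h
      obtain ⟨rfl, h⟩ := h
      cases l with
      | nil => simp at h
      | cons x t =>
        rw [cons_prefix_cons] at h
        exact Or.inl ⟨rfl, t, by rw [h.1]⟩
    · exact Or.inr h
  · rintro (⟨rfl, t, rfl⟩ | h)
    · exact Or.inl (cons_prefix_cons.2 ⟨rfl, cons_prefix_cons.2 ⟨rfl, nil_prefix⟩⟩)
    · exact Or.inr h

@[simp] lemma pair_infix_nil {a b : Step} : ¬ ([a, b] <:+: ([] : List Step)) := by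
  intro h
  simpa using h.length_le

lemma pair_infix_append {a b : Step} {s t : List Step} :
    [a, b] <:+: (s ++ [a, b] ++ t) := ⟨s, t, rfl⟩

/-! ### Expansion -/

def ex : Step → List Step
  | .U => [.H, .U]
  | .H => [.H]
  | .D => [.D]

def E (M : List Step) : List Step := M.flatMap ex

@[simp] lemma E_nil : E [] = [] := rfl
@[simp] lemma E_cons (s : Step) (M : List Step) : E (s :: M) = ex s ++ E M := rfl
@[simp] lemma E_append (M N : List Step) : E (M ++ N) = E M ++ E N := by
  simp [E]

@[simp] lemma hgt_ex (s : Step) : hgt (ex s) = s.val := by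
  cases s <;> simp [ex, Step.val]

@[simp] lemma hgt_E (M : List Step) : hgt (E M) = hgt M := by
  induction M with
  | nil => rfl
  | cons s t ih => simp [ih]

lemma E_eq_nil_iff {M : List Step} : E M = [] ↔ M = [] := by
  cases M with
  | nil => simp
  | cons s t =>
    simp only [E_cons]
    constructor
    · intro h
      cases s <;> simp [ex] at h
    · intro h; simp at h

lemma head?_E (s : Step) (t : List Step) :
    (E (s :: t)).head? = some (if s = .D then .D else .H) := by
  cases s <;> rfl

lemma head?_E_ne_U {M : List Step} : (E M).head? ≠ some .U := by
  cases M with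
  | nil => simp
  | cons s t => rw [head?_E]; split <;> simp

/-! ### Counting -/

lemma count_U_E (M : List Step) : (E M).count Step.U = M.count Step.U := by
  induction M with
  | nil => rfl
  | cons s t ih => cases s <;> simp [ex, List.count_cons, List.count_append, ih]

lemma count_H_E (M : List Step) :
    (E M).count Step.H = M.count Step.H + M.count Step.U := by
  induction M with
  | nil => rfl
  | cons s t ih => cases s <;> simp [ex, List.count_cons, List.count_append, ih] <;> ring

lemma count_D_E (M : List Step) : (E M).count Step.D = M.count Step.D := by
  induction M with
  | nil => rfl
  | cons s t ih => cases s <;> simp [ex, List.count_cons, List.count_append, ih]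

lemma length_eq_counts (l : List Step) :
    l.length = l.count Step.U + l.count Step.H + l.count Step.D := by
  induction l with
  | nil => rfl
  | cons s t ih => cases s <;> simp [List.count_cons, ih] <;> ring

lemma hgt_eq_counts (l : List Step) :
    hgt l = (l.count Step.U : ℤ) - l.count Step.D := by
  induction l with
  | nil => rfl
  | cons s t ih => cases s <;> simp [List.count_cons, Step.val, ih] <;> ring

lemma count_U_eq_count_D {l : List Step} (h : hgt l = 0) :
    l.count Step.U = l.count Step.D := by
  have := hgt_eq_counts l
  rw [h] at this
  exact_mod_cast (sub_eq_zero.1 this.symm)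

/-! ### Contraction -/

def ctr : List Step → List Step
  | .H :: .U :: r => .U :: ctr r
  | s :: r => s :: ctr r
  | [] => []

lemma ctr_E (M : List Step) : ctr (E M) = M := by
  induction M with
  | nil => rfl
  | cons s t ih =>
    cases s with
    | U => simpa [ex, ctr] using ih
    | H =>
      show ctr (Step.H :: E t) = Step.H :: t
      cases ht : E t with
      | nil => rw [E_eq_nil_iff.1 ht]; rfl
      | cons x r =>
        have hx : x ≠ Step.U := by
          intro h; subst h
          exact head?_E_ne_U (by rw [ht]; rfl)
        cases x with
        | U => exact absurd rfl hx
        | H => show Step.H :: ctr (Step.H :: r) = _; rw [← ht, ih]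
        | D => show Step.H :: ctr (Step.D :: r) = _; rw [← ht, ih]
    | D => simpa [ex, ctr] using ih

end SecAux
namespace SecAux

open List

lemma pair_infix_cons_of {a b c : Step} {l : List Step} (h : [a, b] <:+: l) :
    [a, b] <:+: (c :: l) := pair_infix_cons.2 (Or.inr h)

lemma E_ctr : ∀ {v : List Step}, v.head? ≠ some Step.U →
    (¬ [Step.U, Step.U] <:+: v) → (¬ [Step.D, Step.U] <:+: v) →
    E (ctr v) = v
  | [], _, _, _ => rfl
  | Step.U :: r, h1, _, _ => absurd rfl h1
  | Step.D :: r, _, h2, h3 => by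
    show E (Step.D :: ctr r) = _
    rw [E_cons]
    have hr : r.head? ≠ some Step.U := by
      intro h
      cases r with
      | nil => simp at h
      | cons x t =>
        simp at h; subst h
        exact h3 (pair_infix_cons.2 (Or.inl ⟨rfl, t, rfl⟩))
    rw [E_ctr hr (fun h => h2 (pair_infix_cons_of h)) (fun h => h3 (pair_infix_cons_of h))]
    rfl
  | [Step.H], _, _, _ => rfl
  | Step.H :: Step.U :: r, _, h2, h3 => by
    show E (Step.U :: ctr r) = _
    rw [E_cons]
    have hr : r.head? ≠ some Step.U := by
      intro h
      cases r with
      | nil => simp at h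
      | cons x t =>
        simp at h; subst h
        exact h2 (pair_infix_cons_of (pair_infix_cons.2 (Or.inl ⟨rfl, t, rfl⟩)))
    rw [E_ctr hr (fun h => h2 (pair_infix_cons_of (pair_infix_cons_of h)))
      (fun h => h3 (pair_infix_cons_of (pair_infix_cons_of h)))]
    rfl
  | Step.H :: Step.H :: r, _, h2, h3 => by
    show E (Step.H :: ctr (Step.H :: r)) = _
    rw [E_cons]
    rw [E_ctr (v := Step.H :: r) (by simp)
      (fun h => h2 (pair_infix_cons_of h)) (fun h => h3 (pair_infix_cons_of h))]
    rfl
  | Step.H :: Step.D :: r, _, h2, h3 => by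
    show E (Step.H :: ctr (Step.D :: r)) = _
    rw [E_cons]
    rw [E_ctr (v := Step.D :: r) (by simp)
      (fun h => h2 (pair_infix_cons_of h)) (fun h => h3 (pair_infix_cons_of h))]
    rfl

end SecAux
namespace SecAux

open List

def Ψ (M : List Step) : List Step := Step.U :: E M ++ [Step.D]

lemma noUU_ED : ∀ M : List Step, ¬ [Step.U, Step.U] <:+: (E M ++ [Step.D])
  | [] => by
    intro h
    rcases pair_infix_cons.1 (by simpa using h) with ⟨h1, _⟩ | h2
    · exact Step.noConfusion h1
    · exact pair_infix_nil h2
  | Step.U :: t => by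
    intro h
    rw [show E (Step.U :: t) ++ [Step.D] = Step.H :: Step.U :: (E t ++ [Step.D]) from rfl] at h
    rcases pair_infix_cons.1 h with ⟨h1, _⟩ | h2
    · exact Step.noConfusion h1
    rcases pair_infix_cons.1 h2 with ⟨_, tl, htl⟩ | h3
    · -- head of E t ++ [D] is U : impossible
      have : (E t ++ [Step.D]).head? = some Step.U := by rw [htl]; rfl
      cases t with
      | nil => simp at this
      | cons s r =>
        rw [List.head?_append_of_ne_nil _ (by rw [Ne, E_eq_nil_iff]; simp)] at this
        rw [head?_E] at this
        split at this <;> simp at this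
    · exact noUU_ED t h3
  | Step.H :: t => by
    intro h
    rw [show E (Step.H :: t) ++ [Step.D] = Step.H :: (E t ++ [Step.D]) from rfl] at h
    rcases pair_infix_cons.1 h with ⟨h1, _⟩ | h2
    · exact Step.noConfusion h1
    · exact noUU_ED t h2
  | Step.D :: t => by
    intro h
    rw [show E (Step.D :: t) ++ [Step.D] = Step.D :: (E t ++ [Step.D]) from rfl] at h
    rcases pair_infix_cons.1 h with ⟨h1, _⟩ | h2
    · exact Step.noConfusion h1
    · exact noUU_ED t h2

lemma noDU_ED : ∀ M : List Step, ¬ [Step.D, Step.U] <:+: (E M ++ [Step.D])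
  | [] => by
    intro h
    rcases pair_infix_cons.1 (by simpa using h) with ⟨_, _, h1⟩ | h2
    · cases h1
    · exact pair_infix_nil h2
  | Step.U :: t => by
    intro h
    rw [show E (Step.U :: t) ++ [Step.D] = Step.H :: Step.U :: (E t ++ [Step.D]) from rfl] at h
    rcases pair_infix_cons.1 h with ⟨h1, _⟩ | h2
    · exact Step.noConfusion h1
    rcases pair_infix_cons.1 h2 with ⟨h1, _⟩ | h3
    · exact Step.noConfusion h1
    · exact noDU_ED t h3
  | Step.H :: t => by
    intro h
    rw [show E (Step.H :: t) ++ [Step.D] = Step.H :: (E t ++ [Step.D]) from rfl] at h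
    rcases pair_infix_cons.1 h with ⟨h1, _⟩ | h2
    · exact Step.noConfusion h1
    · exact noDU_ED t h2
  | Step.D :: t => by
    intro h
    rw [show E (Step.D :: t) ++ [Step.D] = Step.D :: (E t ++ [Step.D]) from rfl] at h
    rcases pair_infix_cons.1 h with ⟨_, tl, htl⟩ | h2
    · have : (E t ++ [Step.D]).head? = some Step.U := by rw [htl]; rfl
      cases t with
      | nil => simp at this
      | cons s r =>
        rw [List.head?_append_of_ne_nil _ (by rw [Ne, E_eq_nil_iff]; simp)] at this
        rw [head?_E] at this
        split at this <;> simp at this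
    · exact noDU_ED t h2

lemma noUD_ED : ∀ M : List Step, ¬ [Step.U, Step.D] <:+: M →
    M.getLast? ≠ some Step.U → ¬ [Step.U, Step.D] <:+: (E M ++ [Step.D])
  | [] => by
    intro _ _ h
    rcases pair_infix_cons.1 (by simpa using h) with ⟨h1, _⟩ | h2
    · exact Step.noConfusion h1
    · exact pair_infix_nil h2
  | Step.U :: t => by
    intro hUD hlast h
    have ht : t ≠ [] := by rintro rfl; exact hlast rfl
    rw [show E (Step.U :: t) ++ [Step.D] = Step.H :: Step.U :: (E t ++ [Step.D]) from rfl] at h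
    rcases pair_infix_cons.1 h with ⟨h1, _⟩ | h2
    · exact Step.noConfusion h1
    rcases pair_infix_cons.1 h2 with ⟨_, tl, htl⟩ | h3
    · -- head of E t ++ [D] is D, so t starts with D, so M has UD
      have : (E t ++ [Step.D]).head? = some Step.D := by rw [htl]; rfl
      cases t with
      | nil => exact ht rfl
      | cons s r =>
        rw [List.head?_append_of_ne_nil _ (by rw [Ne, E_eq_nil_iff]; simp)] at this
        rw [head?_E] at this
        have hs : s = Step.D := by
          by_contra hne
          rw [if_neg hne] at this
          simp at this
        subst hs
        exact hUD (pair_infix_cons.2 (Or.inl ⟨rfl, r, rfl⟩))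
    · refine noUD_ED t (fun hh => hUD (pair_infix_cons_of hh)) ?_ h3
      rw [show (Step.U :: t).getLast? = t.getLast? from by cases t with | nil => exact absurd rfl ht | cons a b => exact List.getLast?_cons_cons] at hlast
      exact hlast
  | Step.H :: t => by
    intro hUD hlast h
    rw [show E (Step.H :: t) ++ [Step.D] = Step.H :: (E t ++ [Step.D]) from rfl] at h
    rcases pair_infix_cons.1 h with ⟨h1, _⟩ | h2
    · exact Step.noConfusion h1
    cases t with
    | nil =>
      rcases pair_infix_cons.1 (by simpa using h2) with ⟨h1, _⟩ | h3
      · exact Step.noConfusion h1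
      · exact pair_infix_nil h3
    | cons s r =>
      refine noUD_ED (s :: r) (fun hh => hUD (pair_infix_cons_of hh)) ?_ h2
      rw [List.getLast?_cons_cons] at hlast
      exact hlast
  | Step.D :: t => by
    intro hUD hlast h
    rw [show E (Step.D :: t) ++ [Step.D] = Step.D :: (E t ++ [Step.D]) from rfl] at h
    rcases pair_infix_cons.1 h with ⟨h1, _⟩ | h2
    · exact Step.noConfusion h1
    cases t with
    | nil =>
      rcases pair_infix_cons.1 (by simpa using h2) with ⟨h1, _⟩ | h3
      · exact Step.noConfusion h1
      · exact pair_infix_nil h3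
    | cons s r =>
      refine noUD_ED (s :: r) (fun hh => hUD (pair_infix_cons_of hh)) ?_ h2
      rw [List.getLast?_cons_cons] at hlast
      exact hlast

end SecAux
namespace SecAux

open List

lemma E_prefix_hgt : ∀ {M q : List Step}, q <+: E M → ∃ p, p <+: M ∧ hgt q = hgt p := by
  intro M
  induction M with
  | nil =>
    intro q hq
    rw [E_nil, List.prefix_nil] at hq
    exact ⟨[], nil_prefix, by rw [hq]⟩
  | cons s t ih =>
    intro q hq
    rw [E_cons] at hq
    rcases prefix_append_cases hq with h | ⟨r, hr, rfl⟩
    · cases s with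
      | U =>
        -- prefixes of [H, U]
        rcases h with ⟨u, hu⟩
        match q, u, hu with
        | [], _, _ => exact ⟨[], nil_prefix, rfl⟩
        | [Step.H], _, _ => exact ⟨[], nil_prefix, by simp [Step.val]⟩
        | [Step.H, Step.U], _, _ =>
          exact ⟨[Step.U], ⟨t, rfl⟩, by simp [Step.val]⟩
      | H =>
        rcases h with ⟨u, hu⟩
        match q, u, hu with
        | [], _, _ => exact ⟨[], nil_prefix, rfl⟩
        | [Step.H], _, _ => exact ⟨[Step.H], ⟨t, rfl⟩, by simp [Step.val]⟩
      | D =>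
        rcases h with ⟨u, hu⟩
        match q, u, hu with
        | [], _, _ => exact ⟨[], nil_prefix, rfl⟩
        | [Step.D], _, _ => exact ⟨[Step.D], ⟨t, rfl⟩, by simp [Step.val]⟩
    · obtain ⟨p, hp, hh⟩ := ih hr
      refine ⟨s :: p, ?_, ?_⟩
      · obtain ⟨u, hu⟩ := hp
        exact ⟨u, by rw [cons_append, hu]⟩
      · rw [hgt_append, hgt_ex, hgt_cons, hh]

lemma E_prefix_of_prefix {p M : List Step} (h : p <+: M) : E p <+: E M := by
  obtain ⟨t, rfl⟩ := h
  exact ⟨E t, (E_append p t).symm⟩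

lemma UD_infix_E {M : List Step} (h : [Step.U, Step.D] <:+: M) :
    [Step.U, Step.D] <:+: E M := by
  obtain ⟨s, t, rfl⟩ := h
  refine ⟨E s ++ [Step.H], E t, ?_⟩
  simp [E, ex]

lemma count_U_psi (M : List Step) : (Ψ M).count Step.U = M.count Step.U + 1 := by
  simp [Ψ, List.count_cons, List.count_append, count_U_E]

lemma count_H_psi (M : List Step) :
    (Ψ M).count Step.H = M.count Step.H + M.count Step.U := by
  simp [Ψ, List.count_cons, List.count_append, count_H_E]

lemma hgt_psi (M : List Step) : hgt (Ψ M) = hgt M := by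
  simp [Ψ, Step.val]

/-- Forward: `Ψ` maps nonempty UD-free Motzkin paths to UU-free bargraphs. -/
theorem psi_isBargraph {M : List Step} (hM : IsMotzkin M)
    (hUD : ¬ [Step.U, Step.D] <:+: M) (hne : M ≠ []) :
    IsBargraph (Ψ M) ∧ ¬ [Step.U, Step.U] <:+: Ψ M := by
  obtain ⟨hpre, h0⟩ := hM
  have hΨ : Ψ M = Step.U :: (E M ++ [Step.D]) := rfl
  have hlast : M.getLast? ≠ some Step.U := by
    intro hl
    have hM' : M = M.dropLast ++ [Step.U] := by
      conv_lhs => rw [← List.dropLast_append_getLast? _ hl]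
    have h1 : 0 ≤ hgt M.dropLast := hpre _ ⟨[Step.U], hM'.symm⟩
    rw [hM', hgt_append] at h0
    simp [Step.val] at h0
    omega
  have hheadE : ∀ tl, E M ++ [Step.D] ≠ Step.U :: tl := by
    intro tl htl
    have h2 : (E M ++ [Step.D]).head? = some Step.U := by rw [htl]; rfl
    cases M with
    | nil => exact hne rfl
    | cons s r =>
      rw [List.head?_append_of_ne_nil _ (by rw [Ne, E_eq_nil_iff]; simp)] at h2
      rw [head?_E] at h2
      split at h2 <;> simp at h2
  constructor
  · refine ⟨?_, ?_, ?_, ?_, ?_⟩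
    · simp [Ψ]
    · rw [hgt_psi]; exact h0
    · -- strict positivity of interior prefixes
      intro p hp hne' hnw
      rcases p with _ | ⟨a, q⟩
      · exact absurd rfl hne'
      rw [hΨ] at hp
      rw [cons_prefix_cons] at hp
      obtain ⟨rfl, hq⟩ := hp
      rcases prefix_append_cases hq with h | ⟨r, hr, rfl⟩
      · obtain ⟨p', hp', hh⟩ := E_prefix_hgt h
        have := hpre p' hp'
        rw [hgt_cons, hh]
        simp only [Step.val]
        omega
      · rcases r with _ | ⟨b, r⟩
        · rw [hgt_cons, append_nil, hgt_E, h0]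
          simp [Step.val]
        · obtain ⟨u, hu⟩ := hr
          simp only [cons_append, List.cons.injEq, List.append_eq_nil_iff] at hu
          obtain ⟨rfl, hru, -⟩ := hu
          subst hru
          exact absurd rfl hnw
    · rw [hΨ]
      intro h
      rcases pair_infix_cons.1 h with ⟨_, tl, htl⟩ | h2
      · have h2 : (E M ++ [Step.D]).head? = some Step.D := by rw [htl]; rfl
        cases M with
        | nil => exact hne rfl
        | cons s r =>
          rw [List.head?_append_of_ne_nil _ (by rw [Ne, E_eq_nil_iff]; simp)] at h2
          rw [head?_E] at h2
          have hs : s = Step.D := by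
            by_contra hns
            rw [if_neg hns] at h2
            simp at h2
          subst hs
          have h3 := hpre [Step.D] ⟨r, rfl⟩
          simp [Step.val] at h3
      · exact noUD_ED M hUD hlast h2
    · rw [hΨ]
      intro h
      rcases pair_infix_cons.1 h with ⟨h1, _⟩ | h2
      · exact Step.noConfusion h1
      · exact noDU_ED M h2
  · rw [hΨ]
    intro h
    rcases pair_infix_cons.1 h with ⟨_, tl, htl⟩ | h2
    · exact hheadE tl htl
    · exact noUU_ED M h2

end SecAux
namespace SecAux

open List

/-- Backward: every UU-free bargraph is `Ψ` of a UD-free nonempty Motzkin path. -/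
theorem bargraph_decomp {w : List Step} (hb : IsBargraph w)
    (hUU : ¬ [Step.U, Step.U] <:+: w) :
    ∃ M : List Step, IsMotzkin M ∧ ¬ [Step.U, Step.D] <:+: M ∧ M ≠ [] ∧ w = Ψ M := by
  obtain ⟨hlen, h0, hpos, hcUD, hcDU⟩ := hb
  obtain ⟨a, t, rfl⟩ : ∃ a t, w = a :: t := by
    cases w with
    | nil => simp at hlen
    | cons a t => exact ⟨a, t, rfl⟩
  have ht : t ≠ [] := by rintro rfl; simp at hlen
  have ha : a = Step.U := by
    have := hpos [a] ⟨t, rfl⟩ (by simp) (by simp [ht])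
    rw [hgt_cons, hgt_nil] at this
    cases a <;> simp [Step.val] at this ⊢
  subst ha
  obtain ⟨v, b, rfl⟩ : ∃ v b, t = v ++ [b] := by
    refine ⟨t.dropLast, t.getLast ht, ?_⟩
    rw [List.dropLast_append_getLast ht]
  have hpre : (Step.U :: v) <+: (Step.U :: (v ++ [b])) := by
    rw [cons_prefix_cons]
    exact ⟨rfl, ⟨[b], rfl⟩⟩
  have h1 := hpos (Step.U :: v) hpre (by simp) (by simp)
  rw [hgt_cons] at h1
  rw [show Step.U :: (v ++ [b]) = (Step.U :: v) ++ [b] from rfl, hgt_append, hgt_cons,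
    hgt_cons, hgt_nil] at h0
  have hb' : b = Step.D := by
    cases b with
    | U => exfalso; simp [Step.val] at h0 h1; omega
    | H => exfalso; simp [Step.val] at h0 h1; omega
    | D => rfl
  subst hb'
  have hvinfix : v <:+: Step.U :: (v ++ [Step.D]) := ⟨[Step.U], [Step.D], rfl⟩
  have hvU : v.head? ≠ some Step.U := by
    intro hh
    cases v with
    | nil => simp at hh
    | cons x r =>
      simp at hh; subst hh
      exact hUU (pair_infix_cons.2 (Or.inl ⟨rfl, r ++ [Step.D], rfl⟩))
  have hvUU : ¬ [Step.U, Step.U] <:+: v := fun h => hUU (h.trans hvinfix)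
  have hvDU : ¬ [Step.D, Step.U] <:+: v := fun h => hcDU (h.trans hvinfix)
  have hE : E (ctr v) = v := E_ctr hvU hvUU hvDU
  set M := ctr v with hM
  have hwM : Step.U :: (v ++ [Step.D]) = Ψ M := by rw [Ψ, ← hE, cons_append]
  have hvhgt : hgt v = 0 := by simp [Step.val] at h0 h1; omega
  have hMne : M ≠ [] := by
    intro hMnil
    rw [hMnil] at hwM
    apply hcUD
    rw [hwM]
    exact ⟨[], [], rfl⟩
  refine ⟨M, ⟨?_, by rw [← hE, hgt_E] at hvhgt; exact hvhgt⟩, ?_, hMne, hwM⟩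
  · intro p hp
    have hEp : E p <+: v := by rw [← hE]; exact E_prefix_of_prefix hp
    have hup : (Step.U :: E p) <+: (Step.U :: (v ++ [Step.D])) := by
      rw [cons_prefix_cons]
      exact ⟨rfl, hEp.trans ⟨[Step.D], rfl⟩⟩
    have hne2 : Step.U :: E p ≠ Step.U :: (v ++ [Step.D]) := by
      intro hh
      have hlen1 := congrArg List.length hh
      have hlen2 := hEp.length_le
      simp at hlen1
      omega
    have := hpos _ hup (by simp) hne2
    rw [hgt_cons, hgt_E] at this
    simp only [Step.val] at this
    omega
  · intro hUD
    apply hcUD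
    have h2 : [Step.U, Step.D] <:+: v := by rw [← hE]; exact UD_infix_E hUD
    exact h2.trans hvinfix

lemma psi_injective : Function.Injective Ψ := by
  intro M N h
  rw [Ψ, Ψ, cons_append, cons_append] at h
  have h2 : E M ++ [Step.D] = E N ++ [Step.D] := by injection h
  have h3 : E M = E N := append_cancel_right h2
  rw [← ctr_E M, ← ctr_E N, h3]

lemma psi_semi {M : List Step} (h0 : hgt M = 0) : semi (Ψ M) = M.length + 1 := by
  have h1 := length_eq_counts M
  have h2 := count_U_eq_count_D h0
  rw [semi, count_U_psi, count_H_psi]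
  omega

lemma psi_countH {M : List Step} (h0 : hgt M = 0) :
    (Ψ M).count Step.H + M.count Step.U = M.length := by
  have h1 := length_eq_counts M
  have h2 := count_U_eq_count_D h0
  rw [count_H_psi]
  omega

/-- The first equivalence, with the `j`-statistic. -/
noncomputable def equivOne (n j : ℕ) (hn : 2 ≤ n) :
    {M : List Step // IsMotzkin M ∧ ¬ [Step.U, Step.D] <:+: M ∧
        M.length + 1 = n ∧ M.count Step.U + j = M.length} ≃
    {w : List Step // IsBargraph w ∧ ¬ [Step.U, Step.U] <:+: w ∧
        semi w = n ∧ w.count Step.H = j} := by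
  apply Equiv.ofBijective (f := fun x => ⟨Ψ x.1,
    (psi_isBargraph x.2.1 x.2.2.1 (fun h => by
      have := x.2.2.2.1; rw [h] at this; simp at this; omega)).1,
    (psi_isBargraph x.2.1 x.2.2.1 (fun h => by
      have := x.2.2.2.1; rw [h] at this; simp at this; omega)).2,
    by rw [psi_semi x.2.1.2]; exact x.2.2.2.1,
    by have := psi_countH (M := x.1) x.2.1.2; have h2 := x.2.2.2.2; omega⟩)
  constructor
  · intro x y h
    exact Subtype.ext (psi_injective (congrArg Subtype.val h))
  · rintro ⟨w, hbar, hUU, hsemi, hj⟩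
    obtain ⟨M, hM, hUD, hne, rfl⟩ := bargraph_decomp hbar hUU
    have h1 := psi_semi hM.2
    have h2 := psi_countH hM.2
    exact ⟨⟨M, hM, hUD, by omega, by omega⟩, rfl⟩

/-- The first equivalence, without the statistic. -/
noncomputable def equivOne' (n : ℕ) (hn : 2 ≤ n) :
    {M : List Step // IsMotzkin M ∧ ¬ [Step.U, Step.D] <:+: M ∧ M.length + 1 = n} ≃
    {w : List Step // IsBargraph w ∧ ¬ [Step.U, Step.U] <:+: w ∧ semi w = n} := by
  apply Equiv.ofBijective (f := fun x => ⟨Ψ x.1,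
    (psi_isBargraph x.2.1 x.2.2.1 (fun h => by
      have := x.2.2.2; rw [h] at this; simp at this; omega)).1,
    (psi_isBargraph x.2.1 x.2.2.1 (fun h => by
      have := x.2.2.2; rw [h] at this; simp at this; omega)).2,
    by rw [psi_semi x.2.1.2]; exact x.2.2.2⟩)
  constructor
  · intro x y h
    exact Subtype.ext (psi_injective (congrArg Subtype.val h))
  · rintro ⟨w, hbar, hUU, hsemi⟩
    obtain ⟨M, hM, hUD, hne, rfl⟩ := bargraph_decomp hbar hUU
    have h1 := psi_semi hM.2
    exact ⟨⟨M, hM, hUD, by omega⟩, rfl⟩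

end SecAux
namespace SecAux

open List

/-! ### Heights along a path, and the nested matching -/

/-- Step at position `i` (default `H`). -/
def stp (M : List Step) (i : ℕ) : Step := M.getD i Step.H

/-- Height after the first `k` steps. -/
def ht (M : List Step) (k : ℕ) : ℤ := hgt (M.take k)

@[simp] lemma ht_zero (M : List Step) : ht M 0 = 0 := rfl

lemma ht_len (M : List Step) : ht M M.length = hgt M := by
  rw [ht, List.take_length]

lemma stp_cons_succ (c : Step) (l : List Step) (k : ℕ) :
    stp (c :: l) (k + 1) = stp l k := List.getD_cons_succ

lemma stp_cons_zero (c : Step) (l : List Step) : stp (c :: l) 0 = c := List.getD_cons_zero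

lemma ht_succ {M : List Step} {i : ℕ} (h : i < M.length) :
    ht M (i + 1) = ht M i + (stp M i).val := by
  rw [ht, ht, List.take_succ, List.getElem?_eq_getElem h, hgt_append]
  congr 1
  show hgt [M[i]] = (stp M i).val
  rw [hgt_cons, hgt_nil, add_zero]
  congr 1
  rw [stp, List.getD_eq_getElem?_getD, List.getElem?_eq_getElem h]
  rfl

lemma ht_nonneg {M : List Step} (hpre : IsMotzkinPrefix M) (k : ℕ) : 0 ≤ ht M k :=
  hpre _ (List.take_prefix k M)

lemma val_le_one (s : Step) : s.val ≤ 1 := by cases s <;> simp [Step.val]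
lemma neg_one_le_val (s : Step) : -1 ≤ s.val := by cases s <;> simp [Step.val]
lemma val_eq_one_iff (s : Step) : s.val = 1 ↔ s = Step.U := by
  cases s <;> simp [Step.val]
lemma val_eq_neg_one_iff (s : Step) : s.val = -1 ↔ s = Step.D := by
  cases s <;> simp [Step.val]

/-- The canonical nested matching: `i` (a `U`) is matched with `j` (a `D`). -/
def mtch (M : List Step) (i j : ℕ) : Prop :=
  i < j ∧ j < M.length ∧ stp M i = Step.U ∧ stp M j = Step.D ∧
    ht M j = ht M i + 1 ∧ ∀ k, i < k → k ≤ j → ht M i + 1 ≤ ht M k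

lemma mtch_ht_close {M : List Step} {i j : ℕ} (h : mtch M i j) :
    ht M (j + 1) = ht M i := by
  obtain ⟨_, hj, _, hD, hcl, _⟩ := h
  rw [ht_succ hj, hD, hcl]
  simp [Step.val]

lemma exists_mtch_right {M : List Step} (hM : IsMotzkin M) {i : ℕ}
    (hi : i < M.length) (hU : stp M i = Step.U) : ∃ j, mtch M i j := by
  classical
  obtain ⟨hpre, h0⟩ := hM
  have hstepi : ht M (i + 1) = ht M i + 1 := by
    rw [ht_succ hi, hU]; rfl
  have hlast : i + 1 ≠ M.length := by
    intro h
    have h1 := ht_nonneg hpre i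
    rw [h, ht_len, h0] at hstepi
    omega
  have hwit : i < M.length - 1 ∧ ht M (M.length - 1 + 1) ≤ ht M i := by
    refine ⟨by omega, ?_⟩
    rw [show M.length - 1 + 1 = M.length from by omega, ht_len, h0]
    exact ht_nonneg hpre i
  have hex : ∃ k, i < k ∧ ht M (k + 1) ≤ ht M i := ⟨M.length - 1, hwit⟩
  have key : ∃ j, (i < j ∧ ht M (j + 1) ≤ ht M i) ∧
      (∀ k, k < j → ¬ (i < k ∧ ht M (k + 1) ≤ ht M i)) ∧ j ≤ M.length - 1 :=
    ⟨Nat.find hex, Nat.find_spec hex, fun k hk => Nat.find_min hex hk, Nat.find_le hwit⟩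
  obtain ⟨j, ⟨hij, hle⟩, hmin, hjle⟩ := key
  have hjlt : j < M.length := by omega
  have hstrong : ∀ k, i < k → k ≤ j → ht M i + 1 ≤ ht M k := by
    intro k hik hkj
    rcases Nat.eq_or_lt_of_le (show i + 1 ≤ k from hik) with heq | hlt
    · rw [← heq]; omega
    · have hk1 : k - 1 < j := by omega
      have h2 := hmin (k - 1) hk1
      rw [not_and_or, not_lt, not_le] at h2
      rcases h2 with h2 | h2
      · omega
      · rw [show k - 1 + 1 = k from by omega] at h2
        omega
  have hjge : ht M i + 1 ≤ ht M j := hstrong j hij le_rfl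
  have hstep : ht M (j + 1) = ht M j + (stp M j).val := ht_succ hjlt
  have hvalD : (stp M j).val = -1 := by
    have := neg_one_le_val (stp M j)
    omega
  refine ⟨j, hij, hjlt, hU, (val_eq_neg_one_iff _).1 hvalD, by omega, hstrong⟩

lemma exists_mtch_left {M : List Step} (hM : IsMotzkin M) {j : ℕ}
    (hj : j < M.length) (hD : stp M j = Step.D) : ∃ i, mtch M i j := by
  classical
  obtain ⟨hpre, h0⟩ := hM
  have hstepj : ht M (j + 1) = ht M j + (stp M j).val := ht_succ hj
  have htj : ht M j = ht M (j + 1) + 1 := by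
    rw [hD] at hstepj; simp [Step.val] at hstepj; omega
  have hP0 : ht M 0 ≤ ht M (j + 1) := by
    simp only [ht_zero]
    exact ht_nonneg hpre (j + 1)
  have keyG : ∃ i, i ≤ j ∧ ht M i ≤ ht M (j + 1) ∧
      ∀ k, i < k → k ≤ j → ¬ (ht M k ≤ ht M (j + 1)) := by
    refine ⟨Nat.findGreatest (fun k => ht M k ≤ ht M (j + 1)) j, Nat.findGreatest_le j, ?_, ?_⟩
    · exact Nat.findGreatest_spec (P := fun k => ht M k ≤ ht M (j + 1)) (Nat.zero_le j) hP0
    · exact fun k hk1 hk2 =>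
        Nat.findGreatest_is_greatest (P := fun k => ht M k ≤ ht M (j + 1)) hk1 hk2
  obtain ⟨i, hile, hPi, hnot'⟩ := keyG
  have hij : i < j := by
    rcases Nat.eq_or_lt_of_le hile with heq | h
    · exfalso; rw [heq] at hPi; omega
    · exact h
  have hnot : ∀ k, i < k → k ≤ j → ht M (j + 1) + 1 ≤ ht M k := by
    intro k h1 h2
    have := hnot' k h1 h2
    omega
  have hstepi : ht M (i + 1) = ht M i + (stp M i).val := ht_succ (by omega)
  have hvalU : (stp M i).val = 1 := by
    have h1 := hnot (i + 1) (by omega) (by omega)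
    have h2 := val_le_one (stp M i)
    omega
  have hti : ht M i = ht M (j + 1) := by
    have h1 := hnot (i + 1) (by omega) (by omega)
    omega
  exact ⟨i, hij, hj, (val_eq_one_iff _).1 hvalU, hD, by omega, fun k h1 h2 => by
    have := hnot k h1 h2; omega⟩

lemma mtch_right_unique {M : List Step} {i j j' : ℕ}
    (h1 : mtch M i j) (h2 : mtch M i j') : j = j' := by
  by_contra hne
  wlog hlt : j < j' generalizing j j'
  · exact this h2 h1 (Ne.symm hne) (by omega)
  have h1a := h1.1
  have hclose := mtch_ht_close h1
  have := h2.2.2.2.2.2 (j + 1) (by omega) (by omega)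
  omega

lemma mtch_left_unique {M : List Step} {i i' j : ℕ}
    (h1 : mtch M i j) (h2 : mtch M i' j) : i = i' := by
  by_contra hne
  wlog hlt : i < i' generalizing i i'
  · exact this h2 h1 (Ne.symm hne) (by omega)
  have ha := h1.2.2.2.2.1
  have hb := h2.2.2.2.2.1
  have hc := h2.1
  have := h1.2.2.2.2.2 i' (by omega) (by omega)
  omega

/-- Characterization of two-letter factors by positions. -/
lemma pair_infix_iff {a b : Step} : ∀ {M : List Step},
    [a, b] <:+: M ↔ ∃ k, k + 1 < M.length ∧ stp M k = a ∧ stp M (k + 1) = b := by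
  intro M
  induction M with
  | nil => simp
  | cons c l ih =>
    rw [pair_infix_cons, ih]
    constructor
    · rintro (⟨rfl, t, rfl⟩ | ⟨k, hk, h1, h2⟩)
      · exact ⟨0, by simp, stp_cons_zero _ _, by rw [stp_cons_succ, stp_cons_zero]⟩
      · exact ⟨k + 1, by simp; omega, by rw [stp_cons_succ]; exact h1,
          by rw [stp_cons_succ]; exact h2⟩
    · rintro ⟨k, hk, h1, h2⟩
      cases k with
      | zero =>
        left
        rw [stp_cons_zero] at h1
        refine ⟨h1, ?_⟩
        cases l with
        | nil => simp at hk
        | cons x t =>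
          rw [stp_cons_succ, stp_cons_zero] at h2
          exact ⟨t, by rw [h2]⟩
      | succ k' =>
        right
        rw [stp_cons_succ] at h1 h2
        exact ⟨k', by simp at hk; omega, h1, h2⟩

lemma mtch_gap {M : List Step} (hUD : ¬ [Step.U, Step.D] <:+: M) {i j : ℕ}
    (h : mtch M i j) : i + 2 ≤ j := by
  obtain ⟨hij, hjlt, hU, hD, _, _⟩ := h
  by_contra hc
  have hji : j = i + 1 := by omega
  exact hUD (pair_infix_iff.2 ⟨i, by omega, hU, by rw [← hji]; exact hD⟩)

end SecAux
namespace SecAux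

open List Finset

/-- The secondary-structure graph of a Motzkin path: path edges plus matching edges. -/
def ssGraph (m : ℕ) (M : List Step) : SimpleGraph (Fin m) where
  Adj a b := ((a : ℕ) + 1 = b ∨ (b : ℕ) + 1 = a) ∨ mtch M a b ∨ mtch M b a
  symm := by
    constructor
    intro a b h
    rcases h with (h | h) | (h | h)
    · exact Or.inl (Or.inr h)
    · exact Or.inl (Or.inl h)
    · exact Or.inr (Or.inr h)
    · exact Or.inr (Or.inl h)
  loopless := by
    constructor
    intro a h
    rcases h with (h | h) | (h | h)
    · omega
    · omega
    · exact absurd h.1 (lt_irrefl _)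
    · exact absurd h.1 (lt_irrefl _)

lemma ssGraph_adj {m : ℕ} {M : List Step} {a b : Fin m} :
    (ssGraph m M).Adj a b ↔
      (((a : ℕ) + 1 = b ∨ (b : ℕ) + 1 = a) ∨ mtch M a b ∨ mtch M b a) := Iff.rfl

theorem ssGraph_secondary {m : ℕ} {M : List Step} (hM : IsMotzkin M)
    (hUD : ¬ [Step.U, Step.D] <:+: M) (hlen : M.length = m) :
    IsSecondaryStructure (ssGraph m M) := by
  refine ⟨fun i j hij => Or.inl (Or.inl hij), ?_, ?_⟩
  · intro i j k hj hk hij1 hij2 hik1 hik2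
    have hj' : mtch M i j ∨ mtch M j i := by
      rcases hj with (h | h) | h
      · exact absurd h hij1
      · exact absurd h hij2
      · exact h
    have hk' : mtch M i k ∨ mtch M k i := by
      rcases hk with (h | h) | h
      · exact absurd h hik1
      · exact absurd h hik2
      · exact h
    rcases hj' with hj' | hj' <;> rcases hk' with hk' | hk'
    · exact Fin.ext (mtch_right_unique hj' hk')
    · exact absurd hj'.2.2.1 (by rw [hk'.2.2.2.1]; simp)
    · exact absurd hk'.2.2.1 (by rw [hj'.2.2.2.1]; simp)
    · exact Fin.ext (mtch_left_unique hj' hk')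
  · rintro ⟨i, j, k, l, hij, hjk, hkl, haik, hajl⟩
    have hik : mtch M i k := by
      rcases haik with (h | h) | (h | h)
      · omega
      · omega
      · exact h
      · exact absurd h.1 (by omega)
    have hjl : mtch M j l := by
      rcases hajl with (h | h) | (h | h)
      · omega
      · omega
      · exact h
      · exact absurd h.1 (by omega)
    have h1 : ht M (i : ℕ) + 1 ≤ ht M (j : ℕ) := hik.2.2.2.2.2 j hij (le_of_lt hjk)
    have h2 : ht M ((k : ℕ) + 1) = ht M (i : ℕ) := mtch_ht_close hik
    have h3 : ht M (j : ℕ) + 1 ≤ ht M ((k : ℕ) + 1) :=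
      hjl.2.2.2.2.2 ((k : ℕ) + 1) (by omega) (by omega)
    omega

lemma stp_eq_getElem {M : List Step} {i : ℕ} (h : i < M.length) : stp M i = M[i] := by
  rw [stp, List.getD_eq_getElem?_getD, List.getElem?_eq_getElem h]
  rfl

lemma stp_last_ne_U {M : List Step} (hM : IsMotzkin M) {m : ℕ} (hlen : M.length = m)
    (hm : 1 ≤ m) : stp M (m - 1) ≠ Step.U := by
  intro hU
  have h1 : ht M (m - 1 + 1) = ht M (m - 1) + 1 := by
    rw [ht_succ (by omega), hU]; rfl
  have h2 : ht M m = 0 := by rw [← hlen, ht_len, hM.2]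
  have h3 := ht_nonneg hM.1 (m - 1)
  rw [show m - 1 + 1 = m from by omega] at h1
  omega

lemma stat_iff {m : ℕ} {M : List Step} (hM : IsMotzkin M)
    (hUD : ¬ [Step.U, Step.D] <:+: M) (hlen : M.length = m) (v : Fin m) :
    ((v : ℕ) + 2 ≤ m ∧ ∀ u, (ssGraph m M).Adj v u → (u : ℕ) ≤ (v : ℕ) + 1) ↔
      ((v : ℕ) + 1 < m ∧ stp M (v : ℕ) ≠ Step.U) := by
  constructor
  · rintro ⟨h2, hall⟩
    refine ⟨by omega, ?_⟩
    intro hU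
    obtain ⟨j, hj⟩ := exists_mtch_right hM (by omega) hU
    have hgap := mtch_gap hUD hj
    have hjm : j < m := by rw [← hlen]; exact hj.2.1
    have := hall ⟨j, hjm⟩ (Or.inr (Or.inl hj))
    simp at this
    omega
  · rintro ⟨h1, hne⟩
    refine ⟨by omega, ?_⟩
    intro u hadj
    rcases hadj with (h | h) | (h | h)
    · omega
    · omega
    · exact absurd h.2.2.1 hne
    · have := h.1; omega

lemma count_eq_sum (a : Step) : ∀ (l : List Step),
    l.count a = ∑ i ∈ Finset.range l.length, (if stp l i = a then 1 else 0) := by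
  intro l
  induction l with
  | nil => simp
  | cons c t ih =>
    rw [List.length_cons, Finset.sum_range_succ']
    have h1 : ∀ i, stp (c :: t) (i + 1) = stp t i := fun i => stp_cons_succ c t i
    have h2 : stp (c :: t) 0 = c := stp_cons_zero c t
    rw [Finset.sum_congr rfl (fun i _ => by rw [h1]), h2]
    rw [List.count_cons, ih]
    by_cases hc : c = a
    · simp [hc]
    · simp [hc, Ne.symm hc]

lemma stat_card {m : ℕ} {M : List Step} (hM : IsMotzkin M)
    (hUD : ¬ [Step.U, Step.D] <:+: M) (hlen : M.length = m) (hm : 1 ≤ m) :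
    Nat.card {v : Fin m // (v : ℕ) + 2 ≤ m ∧
        ∀ u, (ssGraph m M).Adj v u → (u : ℕ) ≤ (v : ℕ) + 1}
      = m - 1 - M.count Step.U := by
  classical
  rw [Nat.card_congr (Equiv.subtypeEquivRight (stat_iff hM hUD hlen))]
  rw [Nat.card_eq_fintype_card, Fintype.card_subtype]
  rw [Finset.card_filter]
  rw [Fin.sum_univ_eq_sum_range (fun i => if i + 1 < m ∧ stp M i ≠ Step.U then 1 else 0) m]
  obtain ⟨n, rfl⟩ : ∃ n, m = n + 1 := ⟨m - 1, by omega⟩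
  have hlast : stp M n ≠ Step.U := by
    have := stp_last_ne_U hM hlen hm
    simpa using this
  have e1 : ∑ i ∈ Finset.range (n + 1), (if i + 1 < n + 1 ∧ stp M i ≠ Step.U then 1 else 0)
      = ∑ i ∈ Finset.range n, (if stp M i ≠ Step.U then 1 else 0) := by
    rw [Finset.sum_range_succ]
    rw [if_neg (by omega)]
    rw [add_zero]
    refine Finset.sum_congr rfl ?_
    intro i hi
    rw [Finset.mem_range] at hi
    by_cases h : stp M i = Step.U
    · simp [h]
    · simp [h, hi]
  have e2 : M.count Step.U = ∑ i ∈ Finset.range n, (if stp M i = Step.U then 1 else 0) := by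
    rw [count_eq_sum, hlen, Finset.sum_range_succ, if_neg hlast, add_zero]
  have e3 : ∑ i ∈ Finset.range n, (if stp M i ≠ Step.U then 1 else 0)
      + ∑ i ∈ Finset.range n, (if stp M i = Step.U then 1 else 0) = n := by
    rw [← Finset.sum_add_distrib]
    have hone : ∀ i ∈ Finset.range n,
        ((if stp M i ≠ Step.U then 1 else 0) + (if stp M i = Step.U then 1 else 0)) = 1 := by
      intro i _
      by_cases h : stp M i = Step.U <;> simp [h]
    rw [Finset.sum_congr rfl hone]
    simp
  rw [e1]
  omega

lemma stp_U_iff {m : ℕ} {M : List Step} (hM : IsMotzkin M)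
    (hUD : ¬ [Step.U, Step.D] <:+: M) (hlen : M.length = m) (k : Fin m) :
    stp M (k : ℕ) = Step.U ↔
      ∃ u : Fin m, (ssGraph m M).Adj k u ∧ (k : ℕ) + 1 < (u : ℕ) := by
  constructor
  · intro hU
    obtain ⟨j, hj⟩ := exists_mtch_right hM (by omega) hU
    have hgap := mtch_gap hUD hj
    have hjm : j < m := by rw [← hlen]; exact hj.2.1
    refine ⟨⟨j, hjm⟩, Or.inr (Or.inl hj), by simpa using by omega⟩
  · rintro ⟨u, hadj, hu⟩
    rcases hadj with (h | h) | (h | h)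
    · omega
    · omega
    · exact h.2.2.1
    · exact absurd h.1 (by omega)

lemma stp_D_iff {m : ℕ} {M : List Step} (hM : IsMotzkin M)
    (hUD : ¬ [Step.U, Step.D] <:+: M) (hlen : M.length = m) (k : Fin m) :
    stp M (k : ℕ) = Step.D ↔
      ∃ u : Fin m, (ssGraph m M).Adj u k ∧ (u : ℕ) + 1 < (k : ℕ) := by
  constructor
  · intro hD
    obtain ⟨i, hi⟩ := exists_mtch_left hM (by omega) hD
    have hgap := mtch_gap hUD hi
    have him : i < m := by omega
    refine ⟨⟨i, him⟩, Or.inr (Or.inl hi), by simpa using by omega⟩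
  · rintro ⟨u, hadj, hu⟩
    rcases hadj with (h | h) | (h | h)
    · omega
    · omega
    · exact h.2.2.2.1
    · exact absurd h.1 (by omega)

lemma ssGraph_injective {m : ℕ} {M N : List Step}
    (hM : IsMotzkin M) (hMUD : ¬ [Step.U, Step.D] <:+: M) (hMlen : M.length = m)
    (hN : IsMotzkin N) (hNUD : ¬ [Step.U, Step.D] <:+: N) (hNlen : N.length = m)
    (hG : ssGraph m M = ssGraph m N) : M = N := by
  apply List.ext_getElem (by omega)
  intro i h1 h2
  have him : i < m := by omega
  have hU : stp M i = Step.U ↔ stp N i = Step.U := by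
    rw [show (i : ℕ) = ((⟨i, him⟩ : Fin m) : ℕ) from rfl]
    rw [stp_U_iff hM hMUD hMlen, stp_U_iff hN hNUD hNlen, hG]
  have hD : stp M i = Step.D ↔ stp N i = Step.D := by
    rw [show (i : ℕ) = ((⟨i, him⟩ : Fin m) : ℕ) from rfl]
    rw [stp_D_iff hM hMUD hMlen, stp_D_iff hN hNUD hNlen, hG]
  have key : stp M i = stp N i := by
    cases hsM : stp M i <;> cases hsN : stp N i <;>
      first
        | rfl
        | (exfalso
           rw [hsM, hsN] at hU hD
           simp at hU hD)
  rw [stp_eq_getElem h1, stp_eq_getElem h2] at key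
  exact key

end SecAux
namespace SecAux

open List Finset

section Recon

variable {m : ℕ} (G : SimpleGraph (Fin m))

open Classical in
/-- Step at a vertex of a secondary structure: `U` if it has a forward arc,
`D` if a backward arc, `H` otherwise. -/
noncomputable def recStep (v : Fin m) : Step :=
  if _ : ∃ u, G.Adj v u ∧ (v : ℕ) + 1 < (u : ℕ) then Step.U
  else if _ : ∃ u, G.Adj u v ∧ (u : ℕ) + 1 < (v : ℕ) then Step.D
  else Step.H

/-- The Motzkin word of a secondary structure. -/
noncomputable def recM : List Step := List.ofFn (recStep G)

@[simp] lemma recM_length : (recM G).length = m := by simp [recM]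

lemma stp_recM {i : ℕ} (h : i < m) : stp (recM G) i = recStep G ⟨i, h⟩ := by
  rw [stp_eq_getElem (by simp [recM]; omega)]
  simp [recM]

/-- Abbreviation for the second axiom. -/
def Ax2 : Prop := ∀ i j k : Fin m, G.Adj i j → G.Adj i k →
    (i : ℕ) + 1 ≠ (j : ℕ) → (j : ℕ) + 1 ≠ (i : ℕ) →
    (i : ℕ) + 1 ≠ (k : ℕ) → (k : ℕ) + 1 ≠ (i : ℕ) → j = k

/-- Abbreviation for the third axiom. -/
def Ax3 : Prop := ¬ ∃ i j k l : Fin m, (i : ℕ) < (j : ℕ) ∧ (j : ℕ) < (k : ℕ) ∧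
    (k : ℕ) < (l : ℕ) ∧ G.Adj i k ∧ G.Adj j l

variable {G}

lemma uniq (h2 : Ax2 G) {a b c : Fin m} (hab : G.Adj a b) (hac : G.Adj a c)
    (hb : (a : ℕ) + 1 < (b : ℕ) ∨ (b : ℕ) + 1 < (a : ℕ))
    (hc : (a : ℕ) + 1 < (c : ℕ) ∨ (c : ℕ) + 1 < (a : ℕ)) : b = c := by
  rcases hb with hb | hb <;> rcases hc with hc | hc <;>
    exact h2 a b c hab hac (by omega) (by omega) (by omega) (by omega)

lemma nocross (h3 : Ax3 G) {a b c d : Fin m} (h1 : (a : ℕ) < (b : ℕ))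
    (h2 : (b : ℕ) < (c : ℕ)) (h4 : (c : ℕ) < (d : ℕ))
    (hac : G.Adj a c) (hbd : G.Adj b d) : False :=
  h3 ⟨a, b, c, d, h1, h2, h4, hac, hbd⟩

lemma recStep_U_iff (v : Fin m) :
    recStep G v = Step.U ↔ ∃ u, G.Adj v u ∧ (v : ℕ) + 1 < (u : ℕ) := by
  rw [recStep]
  split_ifs with h1 h2
  · simp [h1]
  · simp [h1]
  · simp [h1]

lemma recStep_D_iff (h2 : Ax2 G) (v : Fin m) :
    recStep G v = Step.D ↔ ∃ u, G.Adj u v ∧ (u : ℕ) + 1 < (v : ℕ) := by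
  rw [recStep]
  split_ifs with hup hdn
  · constructor
    · intro h; exact absurd h (by simp)
    · rintro ⟨u, hadj, hlt⟩
      obtain ⟨u', hadj', hlt'⟩ := hup
      have huu := uniq h2 hadj.symm hadj' (Or.inr hlt) (Or.inl hlt')
      have hv := congrArg Fin.val huu
      omega
  · simp [hdn]
  · simp [hdn]


variable (G)

open Classical in
/-- Backward-arc partner. -/
noncomputable def dpart (v : Fin m) : Fin m :=
  if h : ∃ u, G.Adj u v ∧ (u : ℕ) + 1 < (v : ℕ) then h.choose else v

open Classical in
/-- Forward-arc partner. -/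
noncomputable def upart (v : Fin m) : Fin m :=
  if h : ∃ u, G.Adj v u ∧ (v : ℕ) + 1 < (u : ℕ) then h.choose else v

variable {G}

lemma dpart_spec {v : Fin m} (h : ∃ u, G.Adj u v ∧ (u : ℕ) + 1 < (v : ℕ)) :
    G.Adj (dpart G v) v ∧ ((dpart G v) : ℕ) + 1 < (v : ℕ) := by
  rw [dpart, dif_pos h]
  exact h.choose_spec

lemma upart_spec {v : Fin m} (h : ∃ u, G.Adj v u ∧ (v : ℕ) + 1 < (u : ℕ)) :
    G.Adj v (upart G v) ∧ (v : ℕ) + 1 < ((upart G v) : ℕ) := by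
  rw [upart, dif_pos h]
  exact h.choose_spec

variable (G)

/-- Number of positions in `[lo, hi)` with a given step. -/
noncomputable def cnt (s : Step) (lo hi : ℕ) : ℕ :=
  ((Finset.univ : Finset (Fin m)).filter
    (fun v : Fin m => lo ≤ (v : ℕ) ∧ (v : ℕ) < hi ∧ recStep G v = s)).card

lemma cnt_split (s : Step) (lo mid hi : ℕ) (h1 : lo ≤ mid) (h2 : mid ≤ hi) :
    cnt G s lo hi = cnt G s lo mid + cnt G s mid hi := by
  rw [cnt, cnt, cnt, ← Finset.card_union_of_disjoint]
  · congr 1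
    ext v
    simp only [Finset.mem_filter, Finset.mem_union, Finset.mem_univ, true_and]
    by_cases hP : recStep G v = s
    · simp only [hP, and_true]
      omega
    · simp [hP]
  · rw [Finset.disjoint_left]
    intro v hv hv'
    simp only [Finset.mem_filter, Finset.mem_univ, true_and] at hv hv'
    obtain ⟨h1', h2', -⟩ := hv
    obtain ⟨h3', h4', -⟩ := hv'
    omega

lemma stp_recM' (v : Fin m) : stp (recM G) (v : ℕ) = recStep G v := by
  rw [stp_recM (G := G) v.2]

lemma ht_recM (k : ℕ) (hk : k ≤ m) :
    ht (recM G) k = (cnt G Step.U 0 k : ℤ) - (cnt G Step.D 0 k : ℤ) := by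
  classical
  have hcount : ∀ a : Step, ((recM G).take k).count a = cnt G a 0 k := by
    intro a
    have hlen : ((recM G).take k).length = k := by simp [recM]; omega
    rw [count_eq_sum, hlen, cnt]
    rw [show ((Finset.univ : Finset (Fin m)).filter
          (fun v : Fin m => 0 ≤ (v : ℕ) ∧ (v : ℕ) < k ∧ recStep G v = a))
        = (Finset.univ : Finset (Fin m)).filter
          (fun v : Fin m => 0 ≤ (v : ℕ) ∧ (v : ℕ) < k ∧ stp (recM G) (v : ℕ) = a) from
      Finset.filter_congr (fun v _ => by rw [stp_recM' (G := G) v])]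
    rw [Finset.card_filter]
    rw [Fin.sum_univ_eq_sum_range
      (fun i => if 0 ≤ i ∧ i < k ∧ stp (recM G) i = a then 1 else 0) m]
    rw [← Finset.sum_subset (Finset.range_subset_range.2 hk)
      (fun i _ hik => by rw [Finset.mem_range] at hik; exact if_neg (by omega))]
    refine Finset.sum_congr rfl fun i hi => ?_
    rw [Finset.mem_range] at hi
    have hstp : stp ((recM G).take k) i = stp (recM G) i := by
      rw [stp_eq_getElem (by rw [hlen]; exact hi),
        stp_eq_getElem (by simp [recM]; omega)]
      exact List.getElem_take ..
    rw [hstp]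
    simp [hi]
  rw [ht, hgt_eq_counts, hcount, hcount]

variable {G}

lemma mem_cnt_filter {s : Step} {lo hi : ℕ} {v : Fin m} :
    v ∈ (Finset.univ : Finset (Fin m)).filter
      (fun v : Fin m => lo ≤ (v : ℕ) ∧ (v : ℕ) < hi ∧ recStep G v = s) ↔
    (lo ≤ (v : ℕ) ∧ (v : ℕ) < hi ∧ recStep G v = s) := by
  classical
  simp [Finset.mem_filter]

/-- In any prefix window, `D`s inject into `U`s. -/
lemma cnt_D_le_U (h2 : Ax2 G) (k : ℕ) : cnt G Step.D 0 k ≤ cnt G Step.U 0 k := by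
  classical
  rw [cnt, cnt]
  apply Finset.card_le_card_of_injOn (dpart G)
  · intro v hv
    rw [Finset.mem_coe, mem_cnt_filter] at hv ⊢
    obtain ⟨-, hvk, hvD⟩ := hv
    obtain ⟨u, hu⟩ := (recStep_D_iff h2 v).1 hvD
    obtain ⟨hadj, hlt⟩ := dpart_spec (G := G) ⟨u, hu⟩
    exact ⟨Nat.zero_le _, by omega, (recStep_U_iff _).2 ⟨v, hadj, hlt⟩⟩
  · intro v hv v' hv' heq
    rw [Finset.mem_coe, mem_cnt_filter] at hv hv'
    obtain ⟨-, -, hvD⟩ := hv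
    obtain ⟨-, -, hvD'⟩ := hv'
    obtain ⟨ha1, hl1⟩ := dpart_spec (G := G) ((recStep_D_iff h2 v).1 hvD)
    obtain ⟨ha2, hl2⟩ := dpart_spec (G := G) ((recStep_D_iff h2 v').1 hvD')
    rw [heq] at ha1 hl1
    exact uniq h2 ha1 ha2 (Or.inl hl1) (Or.inl hl2)

/-- Globally, `U`s inject into `D`s. -/
lemma cnt_U_le_D (h2 : Ax2 G) : cnt G Step.U 0 m ≤ cnt G Step.D 0 m := by
  classical
  rw [cnt, cnt]
  apply Finset.card_le_card_of_injOn (upart G)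
  · intro v hv
    rw [Finset.mem_coe, mem_cnt_filter] at hv ⊢
    obtain ⟨-, hvk, hvU⟩ := hv
    obtain ⟨hadj, hlt⟩ := upart_spec (G := G) ((recStep_U_iff v).1 hvU)
    exact ⟨Nat.zero_le _, (upart G v).2, (recStep_D_iff h2 _).2 ⟨v, hadj, hlt⟩⟩
  · intro v hv v' hv' heq
    rw [Finset.mem_coe, mem_cnt_filter] at hv hv'
    obtain ⟨-, -, hvU⟩ := hv
    obtain ⟨-, -, hvU'⟩ := hv'
    obtain ⟨ha1, hl1⟩ := upart_spec (G := G) ((recStep_U_iff v).1 hvU)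
    obtain ⟨ha2, hl2⟩ := upart_spec (G := G) ((recStep_U_iff v').1 hvU')
    rw [heq] at ha1 hl1
    exact uniq h2 ha1.symm ha2.symm (Or.inr hl1) (Or.inr hl2)

/-- Inside an arc `(a, b)`, `D`s inject into `U`s. -/
lemma cnt_D_le_U_arc (h2 : Ax2 G) (h3 : Ax3 G) {a b : Fin m}
    (hab : G.Adj a b) (hlt : (a : ℕ) + 1 < (b : ℕ)) {κ : ℕ} (hκ : κ ≤ (b : ℕ)) :
    cnt G Step.D ((a : ℕ) + 1) κ ≤ cnt G Step.U ((a : ℕ) + 1) κ := by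
  classical
  rw [cnt, cnt]
  apply Finset.card_le_card_of_injOn (dpart G)
  · intro v hv
    rw [Finset.mem_coe, mem_cnt_filter] at hv ⊢
    obtain ⟨hva, hvk, hvD⟩ := hv
    obtain ⟨hadj, hl⟩ := dpart_spec (G := G) ((recStep_D_iff h2 v).1 hvD)
    set u := dpart G v with hu
    have hub : (a : ℕ) < (u : ℕ) := by
      rcases Nat.lt_trichotomy (u : ℕ) (a : ℕ) with h | h | h
      · exact absurd (nocross h3 h (by omega) (by omega) hadj hab) id
      · exfalso
        have hua : u = a := Fin.ext h
        rw [hua] at hadj hl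
        have := uniq h2 hadj hab (Or.inl hl) (Or.inl (by omega))
        have := congrArg Fin.val this
        omega
      · exact h
    exact ⟨by omega, by omega, (recStep_U_iff _).2 ⟨v, hadj, hl⟩⟩
  · intro v hv v' hv' heq
    rw [Finset.mem_coe, mem_cnt_filter] at hv hv'
    obtain ⟨-, -, hvD⟩ := hv
    obtain ⟨-, -, hvD'⟩ := hv'
    obtain ⟨ha1, hl1⟩ := dpart_spec (G := G) ((recStep_D_iff h2 v).1 hvD)
    obtain ⟨ha2, hl2⟩ := dpart_spec (G := G) ((recStep_D_iff h2 v').1 hvD')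
    rw [heq] at ha1 hl1
    exact uniq h2 ha1 ha2 (Or.inl hl1) (Or.inl hl2)

/-- Inside an arc `(a, b)`, `U`s inject into `D`s. -/
lemma cnt_U_le_D_arc (h2 : Ax2 G) (h3 : Ax3 G) {a b : Fin m}
    (hab : G.Adj a b) (hlt : (a : ℕ) + 1 < (b : ℕ)) :
    cnt G Step.U ((a : ℕ) + 1) (b : ℕ) ≤ cnt G Step.D ((a : ℕ) + 1) (b : ℕ) := by
  classical
  rw [cnt, cnt]
  apply Finset.card_le_card_of_injOn (upart G)
  · intro v hv
    rw [Finset.mem_coe, mem_cnt_filter] at hv ⊢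
    obtain ⟨hva, hvb, hvU⟩ := hv
    obtain ⟨hadj, hl⟩ := upart_spec (G := G) ((recStep_U_iff v).1 hvU)
    set u := upart G v with hu
    have hub : (u : ℕ) < (b : ℕ) := by
      rcases Nat.lt_trichotomy (b : ℕ) (u : ℕ) with h | h | h
      · exact absurd (nocross h3 (show (a : ℕ) < (v : ℕ) from by omega) (by omega) h hab hadj) id
      · exfalso
        have hub' : u = b := Fin.ext h.symm
        rw [hub'] at hadj hl
        have := uniq h2 hadj.symm hab.symm (Or.inr hl) (Or.inr (by omega))
        have := congrArg Fin.val this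
        omega
      · exact h
    exact ⟨by omega, by omega, (recStep_D_iff h2 _).2 ⟨v, hadj, hl⟩⟩
  · intro v hv v' hv' heq
    rw [Finset.mem_coe, mem_cnt_filter] at hv hv'
    obtain ⟨-, -, hvU⟩ := hv
    obtain ⟨-, -, hvU'⟩ := hv'
    obtain ⟨ha1, hl1⟩ := upart_spec (G := G) ((recStep_U_iff v).1 hvU)
    obtain ⟨ha2, hl2⟩ := upart_spec (G := G) ((recStep_U_iff v').1 hvU')
    rw [heq] at ha1 hl1
    exact uniq h2 ha1.symm ha2.symm (Or.inr hl1) (Or.inr hl2)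


lemma recM_motzkin (h2 : Ax2 G) : IsMotzkin (recM G) := by
  constructor
  · intro p hp
    have hlp : p.length ≤ m := by
      have := hp.length_le
      simpa using this
    have hpt : p = (recM G).take p.length := List.prefix_iff_eq_take.1 hp
    have h1 := ht_recM G p.length hlp
    have h3 := cnt_D_le_U h2 p.length
    rw [ht] at h1
    rw [← hpt] at h1
    rw [h1]
    have : (cnt G Step.D 0 p.length : ℤ) ≤ (cnt G Step.U 0 p.length : ℤ) := by
      exact_mod_cast h3
    omega
  · have h1 := ht_recM G m le_rfl
    have h3 := cnt_D_le_U h2 m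
    have h4 := cnt_U_le_D h2
    rw [ht, List.take_of_length_le (by rw [recM_length])] at h1
    rw [h1]
    have : cnt G Step.U 0 m = cnt G Step.D 0 m := le_antisymm h4 h3
    rw [this]
    ring

lemma recM_noUD (h2 : Ax2 G) (h3 : Ax3 G) : ¬ [Step.U, Step.D] <:+: recM G := by
  intro h
  obtain ⟨k, hk, hU, hD⟩ := pair_infix_iff.1 h
  rw [recM_length] at hk
  have hkm : k < m := by omega
  have hk1m : k + 1 < m := hk
  rw [stp_recM (G := G) hkm] at hU
  rw [stp_recM (G := G) hk1m] at hD
  obtain ⟨u, hadju, hltu⟩ := (recStep_U_iff _).1 hU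
  obtain ⟨w, hadjw, hltw⟩ := (recStep_D_iff h2 _).1 hD
  have e1 : ((⟨k, hkm⟩ : Fin m) : ℕ) = k := rfl
  have e2 : ((⟨k + 1, hk1m⟩ : Fin m) : ℕ) = k + 1 := rfl
  exact nocross h3 (a := w) (b := ⟨k, hkm⟩) (c := ⟨k + 1, hk1m⟩) (d := u)
    (by omega) (by omega) (by omega) hadjw hadju

lemma adj_mtch (h2 : Ax2 G) (h3 : Ax3 G) {a b : Fin m}
    (hab : G.Adj a b) (hlt : (a : ℕ) + 1 < (b : ℕ)) :
    mtch (recM G) (a : ℕ) (b : ℕ) := by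
  have ham : (a : ℕ) < m := a.2
  have hbm : (b : ℕ) < m := b.2
  have hU : stp (recM G) (a : ℕ) = Step.U := by
    rw [stp_recM' (G := G)]
    exact (recStep_U_iff _).2 ⟨b, hab, hlt⟩
  have hD : stp (recM G) (b : ℕ) = Step.D := by
    rw [stp_recM' (G := G)]
    exact (recStep_D_iff h2 _).2 ⟨a, hab, hlt⟩
  have hstep : ht (recM G) ((a : ℕ) + 1) = ht (recM G) (a : ℕ) + 1 := by
    rw [ht_succ (by rw [recM_length]; omega), hU]; rfl
  have hkey : ∀ κ : ℕ, (a : ℕ) < κ → κ ≤ (b : ℕ) →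
      ht (recM G) κ = ht (recM G) ((a : ℕ) + 1)
        + ((cnt G Step.U ((a : ℕ) + 1) κ : ℤ) - (cnt G Step.D ((a : ℕ) + 1) κ : ℤ)) := by
    intro κ h1 h2'
    have hκm : κ ≤ m := by omega
    rw [ht_recM G κ hκm, ht_recM G ((a : ℕ) + 1) (by omega)]
    rw [cnt_split G Step.U 0 ((a : ℕ) + 1) κ (by omega) (by omega)]
    rw [cnt_split G Step.D 0 ((a : ℕ) + 1) κ (by omega) (by omega)]
    push_cast
    ring
  refine ⟨by omega, by rw [recM_length]; omega, hU, hD, ?_, ?_⟩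
  · have h4 := cnt_D_le_U_arc h2 h3 hab hlt (le_refl (b : ℕ))
    have h5 := cnt_U_le_D_arc h2 h3 hab hlt
    have h6 : cnt G Step.U ((a : ℕ) + 1) (b : ℕ) = cnt G Step.D ((a : ℕ) + 1) (b : ℕ) :=
      le_antisymm h5 h4
    rw [hkey (b : ℕ) (by omega) le_rfl, h6, hstep]
    ring
  · intro k hk1 hk2
    have h4 := cnt_D_le_U_arc h2 h3 hab hlt hk2
    have h5 : (cnt G Step.D ((a : ℕ) + 1) k : ℤ) ≤ (cnt G Step.U ((a : ℕ) + 1) k : ℤ) := by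
      exact_mod_cast h4
    rw [hkey k hk1 hk2]
    omega

lemma ssGraph_recM (h1 : ∀ i j : Fin m, (i : ℕ) + 1 = (j : ℕ) → G.Adj i j)
    (h2 : Ax2 G) (h3 : Ax3 G) : ssGraph m (recM G) = G := by
  ext a b
  rw [ssGraph_adj]
  constructor
  · rintro ((h | h) | (h | h))
    · exact h1 a b h
    · exact (h1 b a h).symm
    · -- mtch (recM G) a b
      have hU : stp (recM G) (a : ℕ) = Step.U := h.2.2.1
      rw [stp_recM' (G := G)] at hU
      obtain ⟨u, hadj, hlt⟩ := (recStep_U_iff _).1 hU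
      have hm2 : mtch (recM G) (a : ℕ) (u : ℕ) := adj_mtch h2 h3 hadj hlt
      have : (u : ℕ) = (b : ℕ) := mtch_right_unique hm2 h
      rw [← Fin.ext this]
      exact hadj
    · have hU : stp (recM G) (b : ℕ) = Step.U := h.2.2.1
      rw [stp_recM' (G := G)] at hU
      obtain ⟨u, hadj, hlt⟩ := (recStep_U_iff _).1 hU
      have hm2 : mtch (recM G) (b : ℕ) (u : ℕ) := adj_mtch h2 h3 hadj hlt
      have : (u : ℕ) = (a : ℕ) := mtch_right_unique hm2 h
      rw [← Fin.ext this]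
      exact hadj.symm
  · intro hadj
    by_cases hc : (a : ℕ) + 1 = (b : ℕ) ∨ (b : ℕ) + 1 = (a : ℕ)
    · exact Or.inl hc
    · push_neg at hc
      have hne : (a : ℕ) ≠ (b : ℕ) := fun h => hadj.ne (Fin.ext h)
      rcases Nat.lt_or_ge (a : ℕ) (b : ℕ) with h | h
      · exact Or.inr (Or.inl (adj_mtch h2 h3 hadj (by omega)))
      · exact Or.inr (Or.inr (adj_mtch h2 h3 hadj.symm (by omega)))

end Recon

end SecAux
namespace SecAux

open List

/-- The second equivalence, with the statistic. -/
noncomputable def equivTwo (n j : ℕ) (hn : 2 ≤ n) (hj : 1 ≤ j) :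
    {M : List Step // IsMotzkin M ∧ ¬ [Step.U, Step.D] <:+: M ∧
        M.length + 1 = n ∧ M.count Step.U + j = M.length} ≃
    {G : SimpleGraph (Fin (n - 1)) // IsSecondaryStructure G ∧
        Nat.card {v : Fin (n - 1) // (v : ℕ) + 2 ≤ n - 1 ∧
          ∀ u, G.Adj v u → (u : ℕ) ≤ (v : ℕ) + 1} = j - 1} := by
  apply Equiv.ofBijective (f := fun x => ⟨ssGraph (n - 1) x.1,
    ssGraph_secondary x.2.1 x.2.2.1 (by omega), by
      rw [stat_card x.2.1 x.2.2.1 (by omega) (by omega)]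
      have h1 := x.2.2.2.1
      have h2 := x.2.2.2.2
      omega⟩)
  constructor
  · intro x y h
    have h2 := congrArg Subtype.val h
    simp only at h2
    exact Subtype.ext (ssGraph_injective x.2.1 x.2.2.1 (by omega)
      y.2.1 y.2.2.1 (by omega) h2)
  · rintro ⟨G, hSS, hstat⟩
    obtain ⟨hA1, hA2, hA3⟩ := hSS
    have hmot : IsMotzkin (recM G) := recM_motzkin hA2
    have hUD : ¬ [Step.U, Step.D] <:+: recM G := recM_noUD hA2 hA3
    have hlen : (recM G).length = n - 1 := recM_length G
    have hGG : ssGraph (n - 1) (recM G) = G := ssGraph_recM hA1 hA2 hA3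
    have hstat2 := stat_card hmot hUD hlen (by omega)
    rw [hGG] at hstat2
    have hcULe : 2 * (recM G).count Step.U ≤ n - 1 := by
      have := length_eq_counts (recM G)
      have := count_U_eq_count_D hmot.2
      omega
    refine ⟨⟨recM G, hmot, hUD, by omega, by omega⟩, ?_⟩
    exact Subtype.ext hGG

/-- The second equivalence, without the statistic. -/
noncomputable def equivTwo' (n : ℕ) (hn : 2 ≤ n) :
    {M : List Step // IsMotzkin M ∧ ¬ [Step.U, Step.D] <:+: M ∧ M.length + 1 = n} ≃
    {G : SimpleGraph (Fin (n - 1)) // IsSecondaryStructure G} := by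
  apply Equiv.ofBijective (f := fun x => ⟨ssGraph (n - 1) x.1,
    ssGraph_secondary x.2.1 x.2.2.1 (by omega)⟩)
  constructor
  · intro x y h
    have h2 := congrArg Subtype.val h
    simp only at h2
    exact Subtype.ext (ssGraph_injective x.2.1 x.2.2.1 (by omega)
      y.2.1 y.2.2.1 (by omega) h2)
  · rintro ⟨G, hSS⟩
    obtain ⟨hA1, hA2, hA3⟩ := hSS
    refine ⟨⟨recM G, recM_motzkin hA2, recM_noUD hA2 hA3, by
      rw [recM_length]; omega⟩, ?_⟩
    exact Subtype.ext (ssGraph_recM hA1 hA2 hA3)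

end SecAux


/-- bargraphs of semiperimeter `n` with no two consecutive `U` steps and
exactly `j` `H` steps are equinumerous with secondary structures on `n - 1` vertices
having exactly `j - 1` vertices (other than the last) whose degree comes only from
consecutive edges pointing upward (no non-consecutive edge to a larger vertex); in
particular, bargraphs of semiperimeter `n` with no `UU` are equinumerous with
secondary structures on `n - 1` vertices. -/
theorem noUU_secondary_structures :
    (∀ n j : ℕ, 2 ≤ n → 1 ≤ j →
      Nat.card {w : List Step // IsBargraph w ∧ ¬ [Step.U, Step.U] <:+: w ∧
          semi w = n ∧ w.count Step.H = j}
        = Nat.card {G : SimpleGraph (Fin (n - 1)) // IsSecondaryStructure G ∧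
            Nat.card {v : Fin (n - 1) // (v : ℕ) + 2 ≤ n - 1 ∧
              ∀ u, G.Adj v u → (u : ℕ) ≤ (v : ℕ) + 1} = j - 1}) ∧
    (∀ n : ℕ, 2 ≤ n →
      Nat.card {w : List Step // IsBargraph w ∧ ¬ [Step.U, Step.U] <:+: w ∧
          semi w = n}
        = Nat.card {G : SimpleGraph (Fin (n - 1)) // IsSecondaryStructure G}) := by
  exact ⟨fun n j hn hj => (Nat.card_congr (SecAux.equivOne n j hn)).symm.trans
      (Nat.card_congr (SecAux.equivTwo n j hn hj)),
    fun n hn => (Nat.card_congr (SecAux.equivOne' n hn)).symm.trans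
      (Nat.card_congr (SecAux.equivTwo' n hn))⟩
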